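/- Let T > 0, η ≥ 0, λ, σ > 0 and x₀ > 0. Let (Ω, F, P) be a probability space carrying a standard Brownian motion W : [0,T] × Ω → ℝ with continuous sample paths. For each N ∈ ℕ (N ≥ 1) define the Euler approximation Y^N_0 := x₀ and Y^N_{k+1} := Y^N_k + (T/N)·((η + σ²/2)·Y^N_k − λ·(Y^N_k)³) + σ·Y^N_k·(W_{(k+1)T/N} − W_{kT/N}) for k = 0, 1, …, N−1. Then lim_{N → ∞} E[|Y^N_N|^p] = ∞ for every p ∈ [1, ∞). -/

import Mathlib

open MeasureTheory ProbabilityTheory Filter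
open scoped NNReal ENNReal

section AuxLemmas
open Real

/-- Lower bound for the Gaussian measure of a short interval to the right of `a ≥ 0`. -/
lemma gauss_Icc_lb (v : ℝ≥0) (hv : 0 < (v:ℝ)) (a : ℝ) (ha : 0 ≤ a) :
    ENNReal.ofReal ((Real.sqrt (2*π))⁻¹ * Real.exp (-(a + Real.sqrt v)^2 / (2*v)))
      ≤ gaussianReal 0 v (Set.Icc a (a + Real.sqrt v)) := by
  have hv0 : v ≠ 0 := by exact_mod_cast hv.ne'
  have hsv : 0 < Real.sqrt v := Real.sqrt_pos.mpr hv
  rw [gaussianReal_apply 0 hv0]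
  have hconst : ENNReal.ofReal ((Real.sqrt (2*π))⁻¹ * Real.exp (-(a + Real.sqrt v)^2 / (2*v)))
      = ENNReal.ofReal ((Real.sqrt (2*π*v))⁻¹ * Real.exp (-(a + Real.sqrt v)^2 / (2*v)))
        * volume (Set.Icc a (a + Real.sqrt v)) := by
    rw [Real.volume_Icc]
    rw [← ENNReal.ofReal_mul (by positivity)]
    congr 1
    have h2 : Real.sqrt (2*π*v) = Real.sqrt (2*π) * Real.sqrt v := by
      rw [← Real.sqrt_mul (by positivity)]
    rw [h2]
    have h3 : a + Real.sqrt ↑v - a = Real.sqrt v := by ring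
    rw [h3]
    field_simp
  rw [hconst]
  have h4 : ENNReal.ofReal ((Real.sqrt (2*π*v))⁻¹ * Real.exp (-(a + Real.sqrt v)^2 / (2*v)))
      * volume (Set.Icc a (a + Real.sqrt v))
      = ∫⁻ _x in Set.Icc a (a + Real.sqrt v),
          ENNReal.ofReal ((Real.sqrt (2*π*v))⁻¹ * Real.exp (-(a + Real.sqrt v)^2 / (2*v))) := by
    rw [setLIntegral_const]
  rw [h4]
  refine setLIntegral_mono' measurableSet_Icc (fun x hx => ?_)
  obtain ⟨hx1, hx2⟩ := hx
  rw [gaussianPDF]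
  apply ENNReal.ofReal_le_ofReal
  unfold gaussianPDFReal
  have hx0 : 0 ≤ x := le_trans ha hx1
  have harg : -(a + Real.sqrt ↑v)^2 / (2*(v:ℝ)) ≤ -(x-0)^2 / (2*(v:ℝ)) := by
    rw [div_le_div_iff_of_pos_right (by positivity)]
    nlinarith [Real.sq_sqrt hv.le]
  exact mul_le_mul_of_nonneg_left (Real.exp_le_exp.mpr harg) (by positivity)

/-- One Euler step at least squares the modulus, once it is large enough. -/
lemma euler_step_lb {lam E σ v T y w r : ℝ} (hlam : 0 < lam) (hE : 0 ≤ E) (hσ : 0 < σ)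
    (hv : 0 < v) (hvT : v ≤ T) (hw : |w| ≤ 1) (hr : 2 ≤ r)
    (hrc : 1 + (1 + T*E + σ) ≤ lam * v * r) (hy : r ≤ |y|) :
    |y|^2 ≤ |y + v*(E*y - lam*y^3) + σ*y*w| := by
  set z := y + v*(E*y - lam*y^3) + σ*y*w with hz
  have h1 : v*(E*y - lam*y^3) = z - y - σ*y*w := by rw [hz]; ring
  have h2 : |v*(E*y - lam*y^3)| ≤ |z| + |y| + σ*|y| := by
    rw [h1]
    calc |z - y - σ*y*w| ≤ |z - y| + |σ*y*w| := abs_sub _ _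
      _ ≤ (|z| + |y|) + |σ*y*w| := by gcongr; exact abs_sub _ _
      _ ≤ |z| + |y| + σ*|y| := by
          have habs : |σ * y * w| = σ * |y| * |w| := by
            rw [abs_mul, abs_mul, abs_of_pos hσ]
          rw [habs]
          have hww : σ * |y| * |w| ≤ σ * |y| :=
            mul_le_of_le_one_right (mul_nonneg hσ.le (abs_nonneg y)) hw
          linarith
  have h3 : v*(lam*|y|^3 - E*|y|) ≤ |v*(E*y - lam*y^3)| := by
    rw [abs_mul, abs_of_pos hv]
    have h3' : lam*|y|^3 - E*|y| ≤ |E*y - lam*y^3| := by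
      have h4 : |lam*y^3| - |E*y| ≤ |lam*y^3 - E*y| := abs_sub_abs_le_abs_sub _ _
      have h5 : |lam*y^3 - E*y| = |E*y - lam*y^3| := abs_sub_comm _ _
      rw [abs_mul, abs_mul, abs_pow, abs_of_pos hlam, abs_of_nonneg hE] at h4
      linarith
    nlinarith
  set u := |y| with hu
  have hu2 : 2 ≤ u := le_trans hr hy
  have hlvu : (2 + T*E + σ) * u^2 ≤ lam*v*u^3 := by
    have h6 : lam * v * r ≤ lam * v * u := by
      have := mul_le_mul_of_nonneg_left hy (by positivity : (0:ℝ) ≤ lam*v)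
      linarith
    nlinarith [sq_nonneg u]
  have h0u : (0:ℝ) ≤ u := by linarith
  have hT0 : 0 < T := lt_of_lt_of_le hv hvT
  have hEu : v*E*u ≤ T*E*u^2 := by
    nlinarith [mul_nonneg (mul_nonneg (sub_nonneg.mpr hvT) hE) h0u,
      mul_nonneg (mul_nonneg hT0.le hE) (by nlinarith : (0:ℝ) ≤ u^2 - u)]
  have huu : u ≤ u^2 := by nlinarith
  have hσu : σ*u ≤ σ*u^2 := by nlinarith
  have hv3 : v*lam*u^3 - v*E*u ≤ |z| + u + σ*u := by nlinarith [h2, h3]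
  linarith

lemma poly_cube_le_twopow (C : ℝ) : ∀ᶠ m : ℕ in atTop, C * ((m:ℝ)+2)^3 ≤ Real.log 2 * 2^m := by
  have hlog : (0:ℝ) < Real.log 2 := Real.log_pos one_lt_two
  set C' := max C 0 + 1 with hC'
  have hC'0 : (0:ℝ) < C' := by positivity
  have h0 : Tendsto (fun m : ℕ => ((m:ℝ)+2)^3 / 2^m) atTop (nhds 0) := by
    have h1 := (tendsto_add_atTop_iff_nat 2).mpr
      (tendsto_pow_const_div_const_pow_of_one_lt 3 (one_lt_two (α := ℝ)))
    have h2 := h1.const_mul (4:ℝ)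
    rw [mul_zero] at h2
    refine h2.congr (fun m => ?_)
    push_cast
    rw [pow_add]
    field_simp
    ring
  have h3 := h0.eventually_lt_const (show (0:ℝ) < Real.log 2 / C' by positivity)
  filter_upwards [h3] with m hm
  have h2m : (0:ℝ) < 2^m := by positivity
  rw [div_lt_iff₀ h2m] at hm
  have key : C' * (((m:ℝ)+2)^3) < Real.log 2 * 2^m := by
    have h4 := mul_lt_mul_of_pos_left hm hC'0
    rwa [← mul_assoc, mul_div_cancel₀ _ hC'0.ne'] at h4
  have hCC : C ≤ C' := by
    have : C ≤ max C 0 := le_max_left _ _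
    linarith
  have hcube : (0:ℝ) ≤ ((m:ℝ)+2)^3 := by positivity
  nlinarith [mul_le_mul_of_nonneg_right hCC hcube]

lemma euler_bLB_tendsto (c₀ T α β : ℝ) (hc : 0 < c₀) (hT : 0 < T) (hα : 0 ≤ α) (hβ : 0 ≤ β) :
    Tendsto (fun m : ℕ => (2:ℝ)^(2^m)
        * (c₀ * Real.exp (-(α*((m:ℝ)+1)+β+1)^2*((m:ℝ)+1)/(2*T))) * c₀^m)
      atTop atTop := by
  obtain ⟨L, hL⟩ : ∃ L, L = Real.log c₀ := ⟨_, rfl⟩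
  set g : ℕ → ℝ := fun m => (2:ℝ)^m * Real.log 2
      + (L - (α*((m:ℝ)+1)+β+1)^2*((m:ℝ)+1)/(2*T)) + (m:ℝ)*L with hg
  have heq : ∀ m : ℕ, (2:ℝ)^(2^m)
        * (c₀ * Real.exp (-(α*((m:ℝ)+1)+β+1)^2*((m:ℝ)+1)/(2*T))) * c₀^m = Real.exp (g m) := by
    intro m
    rw [hg]
    simp only []
    rw [Real.exp_add, Real.exp_add, Real.exp_sub]
    have e1 : Real.exp ((2:ℝ)^m * Real.log 2) = (2:ℝ)^(2^m) := by
      have h := Real.exp_nat_mul (Real.log 2) (2^m)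
      rw [Real.exp_log two_pos] at h
      push_cast at h
      exact h
    have e2 : Real.exp L = c₀ := by rw [hL]; exact Real.exp_log hc
    have e3 : Real.exp ((m:ℝ)*L) = c₀^m := by
      rw [Real.exp_nat_mul, hL, Real.exp_log hc]
    rw [e1, e2, e3]
    have e5 : c₀ / Real.exp ((α*((m:ℝ)+1)+β+1)^2*((m:ℝ)+1)/(2*T))
        = c₀ * Real.exp (-(α*((m:ℝ)+1)+β+1)^2*((m:ℝ)+1)/(2*T)) := by
      rw [div_eq_mul_inv]
      congr 1
      rw [← Real.exp_neg]
      congr 1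
      ring
    rw [e5]
  have hgt : Tendsto g atTop atTop := by
    obtain ⟨C, hC⟩ : ∃ C, C = (α+β+1)^2/(2*T) + |L| + 1 := ⟨_, rfl⟩
    have hev := poly_cube_le_twopow C
    refine tendsto_atTop_mono' atTop ?_ tendsto_natCast_atTop_atTop
    filter_upwards [hev] with m hm
    have hm2 : (0:ℝ) ≤ (m:ℝ) := Nat.cast_nonneg m
    have h1 : α*((m:ℝ)+1)+β+1 ≤ (α+β+1)*((m:ℝ)+2) := by nlinarith
    have h2 : (α*((m:ℝ)+1)+β+1)^2 ≤ ((α+β+1)*((m:ℝ)+2))^2 :=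
      pow_le_pow_left₀ (by positivity) h1 2
    have h3 : (α*((m:ℝ)+1)+β+1)^2*((m:ℝ)+1)/(2*T) ≤ (α+β+1)^2/(2*T)*((m:ℝ)+2)^3 := by
      rw [div_mul_eq_mul_div, div_le_div_iff₀ (by positivity) (by positivity)]
      have h2b := mul_le_mul h2 (show (m:ℝ)+1 ≤ (m:ℝ)+2 by linarith)
        (by positivity) (by positivity)
      nlinarith [mul_le_mul_of_nonneg_right h2b (show (0:ℝ) ≤ 2*T by positivity)]
    have h5 : (m:ℝ) + 1 ≤ ((m:ℝ)+2)^3 := by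
      nlinarith [sq_nonneg ((m:ℝ)), mul_nonneg (mul_nonneg hm2 hm2) hm2]
    have h6 : |L| * ((m:ℝ)+1) ≤ |L| * ((m:ℝ)+2)^3 :=
      mul_le_mul_of_nonneg_left h5 (abs_nonneg L)
    have h7 : (m:ℝ) ≤ ((m:ℝ)+2)^3 := by
      nlinarith [sq_nonneg ((m:ℝ)), mul_nonneg (mul_nonneg hm2 hm2) hm2]
    have hLm : L + (m:ℝ)*L ≥ -(|L| * ((m:ℝ)+1)) := by
      rcases abs_cases L with ⟨h,_⟩ | ⟨h,_⟩ <;> nlinarith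
    have hCsum : C * ((m:ℝ)+2)^3
        = (α+β+1)^2/(2*T)*((m:ℝ)+2)^3 + |L| * ((m:ℝ)+2)^3 + ((m:ℝ)+2)^3 := by
      rw [hC]; ring
    show (m:ℝ) ≤ (2:ℝ)^m * Real.log 2
      + (L - (α*((m:ℝ)+1)+β+1)^2*((m:ℝ)+1)/(2*T)) + (m:ℝ)*L
    have hQ : (α*((m:ℝ)+1)+β+1)^2*((m:ℝ)+1)/(2*T) + |L| * ((m:ℝ)+1) + (m:ℝ)
        ≤ Real.log 2 * 2^m := by linarith
    linarith [hLm, hQ]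
  exact (Real.tendsto_exp_atTop.comp hgt).congr fun m => (heq m).symm

end AuxLemmas

/-- `W` is a standard Brownian motion on the time interval `[0, T]` with
continuous sample paths: each `W t` is measurable, `W 0 = 0`, the sample paths
are continuous on `[0, T]`, the increment `W t - W s` is centered Gaussian with
variance `t - s` for `0 ≤ s ≤ t ≤ T`, and increments over disjoint consecutive
time intervals are independent. -/
def IsStandardBrownianMotion {Ω : Type*} [MeasurableSpace Ω] (P : Measure Ω)
    (T : ℝ) (W : ℝ → Ω → ℝ) : Prop :=
  (∀ t, t ∈ Set.Icc 0 T → Measurable (W t)) ∧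
  (∀ ω, W 0 ω = 0) ∧
  (∀ ω, ContinuousOn (fun t => W t ω) (Set.Icc 0 T)) ∧
  (∀ s t : ℝ, 0 ≤ s → s ≤ t → t ≤ T →
    Measure.map (fun ω => W t ω - W s ω) P = gaussianReal 0 (Real.toNNReal (t - s))) ∧
  (∀ (n : ℕ) (t : Fin (n + 1) → ℝ), Monotone t → (∀ i, t i ∈ Set.Icc 0 T) →
    iIndepFun
      (fun (i : Fin n) => fun ω => W (t i.succ) ω - W (t i.castSucc) ω) P)

set_option maxHeartbeats 1600000 in
theorem stmt_17 {Ω : Type*} [MeasurableSpace Ω] (P : MeasureTheory.Measure Ω)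
    [MeasureTheory.IsProbabilityMeasure P]
    (T : ℝ) (hT : 0 < T)
    (η lam σ : ℝ) (hη : 0 ≤ η) (hlam : 0 < lam) (hσ : 0 < σ) (x₀ : ℝ) (hx₀ : 0 < x₀)
    (W : ℝ → Ω → ℝ) (hW : IsStandardBrownianMotion P T W)
    (Y : ℕ → ℕ → Ω → ℝ)
    (hY0 : ∀ N, 1 ≤ N → ∀ ω, Y N 0 ω = x₀)
    (hYrec : ∀ N, 1 ≤ N → ∀ k < N, ∀ ω,
      Y N (k + 1) ω = Y N k ω + (T / N) * ((η + σ ^ 2 / 2) * Y N k ω - lam * (Y N k ω) ^ 3)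
        + σ * Y N k ω * (W (((k : ℝ) + 1) * T / N) ω - W ((k : ℝ) * T / N) ω)) :
    ∀ p : ℝ, 1 ≤ p →
      Tendsto (fun N : ℕ => ∫⁻ ω, ENNReal.ofReal (|Y N N ω| ^ p) ∂(P : MeasureTheory.Measure Ω)) atTop (nhds ⊤) := by
  obtain ⟨hWmeas, hW0, -, hWlaw, hWind⟩ := hW
  intro p hp
  -- global constants
  obtain ⟨E, hE⟩ : ∃ E, E = η + σ^2/2 := ⟨_, rfl⟩
  have hE0 : 0 ≤ E := by rw [hE]; positivity
  obtain ⟨D, hD⟩ : ∃ D, D = 1 + T*E + σ := ⟨_, rfl⟩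
  have hD0 : 0 < D := by rw [hD]; nlinarith [mul_nonneg hT.le hE0]
  obtain ⟨C₀, hC₀⟩ : ∃ c, c = 1 + T*E + T*lam*x₀^2 := ⟨_, rfl⟩
  have hC₀0 : 0 < C₀ := by
    rw [hC₀]
    nlinarith [mul_nonneg hT.le hE0, mul_pos (mul_pos hT hlam) (pow_pos hx₀ 2)]
  obtain ⟨α, hα⟩ : ∃ a, a = (1+D)/(lam*T*x₀*σ) := ⟨_, rfl⟩
  have hα0 : 0 ≤ α := by rw [hα]; apply div_nonneg (by linarith) (by positivity)
  obtain ⟨β, hβ⟩ : ∃ b, b = (2+x₀*C₀)/(x₀*σ) := ⟨_, rfl⟩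
  have hβ0 : 0 ≤ β := by rw [hβ]; apply div_nonneg (by nlinarith) (by positivity)
  obtain ⟨c₀, hc₀⟩ : ∃ c, c = (Real.sqrt (2*Real.pi))⁻¹ * Real.exp (-(1:ℝ)/2) := ⟨_, rfl⟩
  have hπ : (0:ℝ) < 2*Real.pi := by positivity
  have hc₀pos : 0 < c₀ := by rw [hc₀]; positivity
  -- the key quantitative estimate
  have key : ∀ m : ℕ, T ≤ ((m:ℝ)+1) →
      ENNReal.ofReal ((2:ℝ)^(2^m)
          * (c₀ * Real.exp (-(α*((m:ℝ)+1)+β+1)^2*((m:ℝ)+1)/(2*T))) * c₀^m)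
        ≤ ∫⁻ ω, ENNReal.ofReal (|Y (m+1) (m+1) ω| ^ p) ∂P := by
    intro m hTm
    have hN1 : 1 ≤ m + 1 := Nat.le_add_left 1 m
    have hNcast : (((m+1:ℕ)):ℝ) = (m:ℝ)+1 := by push_cast; ring
    have hN0 : (0:ℝ) < ((m+1:ℕ):ℝ) := by rw [hNcast]; positivity
    obtain ⟨v, hv⟩ : ∃ v:ℝ, v = T/((m+1:ℕ):ℝ) := ⟨_, rfl⟩
    have hv0 : 0 < v := by rw [hv]; positivity
    have hvT : v ≤ T := by
      rw [hv]; apply div_le_self hT.le; rw [hNcast]; linarith [Nat.cast_nonneg (α := ℝ) m]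
    have hv1 : v ≤ 1 := by
      rw [hv, div_le_one hN0, hNcast]; exact hTm
    have hsv0 : 0 < Real.sqrt v := Real.sqrt_pos.mpr hv0
    have hsv1 : Real.sqrt v ≤ 1 := by
      rw [show (1:ℝ) = Real.sqrt 1 by rw [Real.sqrt_one]]
      exact Real.sqrt_le_sqrt hv1
    obtain ⟨r, hr⟩ : ∃ r, r = max 2 ((1+D)*((m+1:ℕ):ℝ)/(lam*T)) := ⟨_, rfl⟩
    have hr2 : 2 ≤ r := by rw [hr]; exact le_max_left _ _
    have hr0 : 0 < r := lt_of_lt_of_le two_pos hr2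
    have hrc : 1 + D ≤ lam * v * r := by
      have h1 : lam * v * ((1+D)*((m+1:ℕ):ℝ)/(lam*T)) = 1+D := by
        rw [hv]; field_simp
      have h2 : (1+D)*((m+1:ℕ):ℝ)/(lam*T) ≤ r := by rw [hr]; exact le_max_right _ _
      calc 1 + D = lam * v * ((1+D)*((m+1:ℕ):ℝ)/(lam*T)) := h1.symm
        _ ≤ lam * v * r := mul_le_mul_of_nonneg_left h2 (by positivity)
    obtain ⟨K, hK⟩ : ∃ K, K = (r + x₀*C₀)/(x₀*σ) := ⟨_, rfl⟩
    have hK0 : 0 ≤ K := by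
      rw [hK]; apply div_nonneg (by nlinarith) (by positivity)
    -- time grid and increments
    set t : Fin (m+1+1) → ℝ := fun i => (i.val : ℝ) * T / ((m+1:ℕ):ℝ) with ht
    have htmem : ∀ i, t i ∈ Set.Icc 0 T := by
      intro i
      constructor
      · apply div_nonneg (by positivity) hN0.le
      · rw [ht]
        simp only []
        rw [div_le_iff₀ hN0]
        have hi : (i.val : ℝ) ≤ ((m+1:ℕ):ℝ) := by
          exact_mod_cast Nat.lt_succ_iff.mp i.isLt
        nlinarith
    have htmono : Monotone t := by
      intro i j hij
      rw [ht]
      simp only []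
      have hij' : (i.val : ℝ) ≤ (j.val : ℝ) := by exact_mod_cast hij
      gcongr
    set Δ : Fin (m+1) → Ω → ℝ := fun i ω => W (t i.succ) ω - W (t i.castSucc) ω with hΔ
    have hΔmeas : ∀ i, Measurable (Δ i) := fun i =>
      (hWmeas _ (htmem _)).sub (hWmeas _ (htmem _))
    have hNe0 : ((m:ℝ)+1) ≠ 0 := by positivity
    have htdiff : ∀ i : Fin (m+1), t i.succ - t i.castSucc = v := by
      intro i
      rw [ht]
      simp only [Fin.val_succ, Fin.coe_castSucc]
      rw [hv, hNcast]
      push_cast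
      field_simp
      ring
    have hΔlaw : ∀ i, Measure.map (Δ i) P = gaussianReal 0 (Real.toNNReal v) := by
      intro i
      have h := hWlaw (t i.castSucc) (t i.succ) (htmem _).1
        (htmono (show i.castSucc < i.succ from Fin.castSucc_lt_succ).le) (htmem _).2
      rw [htdiff i] at h
      exact h
    have hvnn : ((Real.toNNReal v) : ℝ) = v := Real.coe_toNNReal _ hv0.le
    have hvnn0 : 0 < ((Real.toNNReal v) : ℝ) := by rw [hvnn]; exact hv0
    -- the events
    set B : Fin (m+1) → Set ℝ :=
      fun i => if i.val = 0 then Set.Icc K (K + Real.sqrt v) else Set.Icc (-1) 1 with hB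
    have hBmeas : ∀ i, MeasurableSet (B i) := by
      intro i; rw [hB]; dsimp only; split <;> exact measurableSet_Icc
    have hB0 : B 0 = Set.Icc K (K + Real.sqrt v) := by rw [hB]; simp
    have hBne : ∀ i : Fin (m+1), i ≠ 0 → B i = Set.Icc (-1) 1 := by
      intro i hi
      rw [hB]
      simp only []
      rw [if_neg]
      intro h
      exact hi (Fin.ext h)
    set s : Fin (m+1) → Set Ω := fun i => Δ i ⁻¹' B i with hs
    have hsmeas : ∀ i, MeasurableSet (s i) := fun i => (hΔmeas i) (hBmeas i)
    set A := ⋂ i, s i with hA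
    have hAmeas : MeasurableSet A := MeasurableSet.iInter hsmeas
    have hPprod : P A = ∏ i, P (s i) :=
      (hWind (m+1) t htmono htmem).meas_iInter (fun i => ⟨B i, hBmeas i, rfl⟩)
    have hmap : ∀ i, P (s i) = gaussianReal 0 (Real.toNNReal v) (B i) := by
      intro i
      calc P (s i) = P (Δ i ⁻¹' B i) := rfl
        _ = Measure.map (Δ i) P (B i) := (Measure.map_apply (hΔmeas i) (hBmeas i)).symm
        _ = gaussianReal 0 (Real.toNNReal v) (B i) := by rw [hΔlaw i]
    -- lower bound for the first factor
    have hfac0 : ENNReal.ofReal (c₀ * Real.exp (-(K+1)^2*((m:ℝ)+1)/(2*T))) ≤ P (s 0) := by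
      rw [hmap 0, hB0]
      have hgauss := gauss_Icc_lb (Real.toNNReal v) hvnn0 K hK0
      rw [hvnn] at hgauss
      refine le_trans ?_ hgauss
      apply ENNReal.ofReal_le_ofReal
      rw [hc₀]
      have h1 : Real.exp (-(1:ℝ)/2) ≤ 1 := by
        rw [Real.exp_le_one_iff]; norm_num
      have h2 : -(K+1)^2*((m:ℝ)+1)/(2*T) ≤ -(K+Real.sqrt v)^2/(2*v) := by
        have e1 : -(K+1)^2*((m:ℝ)+1)/(2*T) = -((K+1)^2/(2*v)) := by
          rw [hv, hNcast]
          field_simp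
        rw [e1, neg_div]
        have h3 : (K+Real.sqrt v)^2 ≤ (K+1)^2 :=
          pow_le_pow_left₀ (by positivity) (by linarith) 2
        apply neg_le_neg
        gcongr
      have h4 : Real.exp (-(1:ℝ)/2) * Real.exp (-(K+1)^2*((m:ℝ)+1)/(2*T))
          ≤ Real.exp (-(K+Real.sqrt v)^2/(2*v)) := by
        calc Real.exp (-(1:ℝ)/2) * Real.exp (-(K+1)^2*((m:ℝ)+1)/(2*T))
            ≤ 1 * Real.exp (-(K+Real.sqrt v)^2/(2*v)) :=
              mul_le_mul h1 (Real.exp_le_exp.mpr h2) (Real.exp_pos _).le zero_le_one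
          _ = _ := one_mul _
      rw [mul_assoc]
      exact mul_le_mul_of_nonneg_left h4 (by positivity)
    -- lower bound for the other factors
    have hfack : ∀ i : Fin (m+1), i ≠ 0 → ENNReal.ofReal c₀ ≤ P (s i) := by
      intro i hi
      rw [hmap i, hBne i hi]
      have hsub : Set.Icc (0:ℝ) (0 + Real.sqrt v) ⊆ Set.Icc (-1) 1 :=
        Set.Icc_subset_Icc (by norm_num) (by linarith)
      have hgauss := gauss_Icc_lb (Real.toNNReal v) hvnn0 0 le_rfl
      rw [hvnn] at hgauss
      refine le_trans (le_trans ?_ hgauss) (measure_mono hsub)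
      have e2 : -(0+Real.sqrt v)^2/(2*v) = -(1:ℝ)/2 := by
        rw [zero_add, Real.sq_sqrt hv0.le]
        field_simp
      rw [hc₀, e2]
    -- probability of the event
    have hPA : ENNReal.ofReal (c₀ * Real.exp (-(K+1)^2*((m:ℝ)+1)/(2*T)))
        * ENNReal.ofReal c₀ ^ m ≤ P A := by
      rw [hPprod, Fin.prod_univ_succ]
      refine mul_le_mul' hfac0 ?_
      calc ENNReal.ofReal c₀ ^ m = ∏ _i : Fin m, ENNReal.ofReal c₀ := by
            rw [Finset.prod_const, Finset.card_univ, Fintype.card_fin]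
        _ ≤ ∏ i : Fin m, P (s i.succ) :=
            Finset.prod_le_prod' (fun i _ => hfack i.succ (Fin.succ_ne_zero i))
    -- pointwise growth on the event
    have hpoint : ∀ ω ∈ A, (2:ℝ)^(2^m) ≤ |Y (m+1) (m+1) ω| ^ p := by
      intro ω hω
      have hmem : ∀ i : Fin (m+1), Δ i ω ∈ B i := fun i => Set.mem_iInter.mp hω i
      have hΔ0 : K ≤ Δ 0 ω := by
        have h := hmem 0
        rw [hB0] at h
        exact h.1
      have hΔk : ∀ i : Fin (m+1), i ≠ 0 → |Δ i ω| ≤ 1 := by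
        intro i hi
        have h := hmem i
        rw [hBne i hi] at h
        exact abs_le.mpr ⟨h.1, h.2⟩
      have hWinc : ∀ k (hk : k < m+1),
          W (((k:ℝ)+1)*T/((m+1:ℕ):ℝ)) ω - W ((k:ℝ)*T/((m+1:ℕ):ℝ)) ω = Δ ⟨k, hk⟩ ω := by
        intro k hk
        show _ = W (t (Fin.succ ⟨k,hk⟩)) ω - W (t (Fin.castSucc ⟨k,hk⟩)) ω
        have e1 : t (Fin.succ ⟨k,hk⟩) = ((k:ℝ)+1)*T/((m+1:ℕ):ℝ) := by
          rw [ht]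
          simp only [Fin.val_succ]
          push_cast
          ring
        have e2 : t (Fin.castSucc ⟨k,hk⟩) = (k:ℝ)*T/((m+1:ℕ):ℝ) := by
          rw [ht]
          simp only [Fin.coe_castSucc]
        rw [e1, e2]
      have hk0 : 0 < m+1 := Nat.succ_pos m
      -- base step
      have hY1 : r ≤ |Y (m+1) 1 ω| := by
        have hrec := hYrec (m+1) hN1 0 hk0 ω
        rw [hY0 (m+1) hN1 ω, hWinc 0 hk0] at hrec
        rw [hrec]
        refine le_trans ?_ (le_abs_self _)
        rw [← hv, ← hE]
        have hΔ0' : K ≤ Δ ⟨0,hk0⟩ ω := hΔ0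
        have hKeq : σ*x₀*K = r + x₀*C₀ := by rw [hK]; field_simp
        have h6 : σ*x₀*K ≤ σ*x₀*(Δ ⟨0,hk0⟩ ω) :=
          mul_le_mul_of_nonneg_left hΔ0' (by positivity)
        have h6' : r + x₀*C₀ ≤ σ*x₀*(Δ ⟨0,hk0⟩ ω) := hKeq ▸ h6
        have h7 : -(x₀*C₀) ≤ x₀ + v*(E*x₀ - lam*x₀^3) := by
          rw [hC₀]
          nlinarith [mul_nonneg (sub_nonneg.mpr hvT) (mul_nonneg hlam.le (pow_nonneg hx₀.le 3)),
            mul_nonneg hv0.le (mul_nonneg hE0 hx₀.le),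
            mul_nonneg hT.le (mul_nonneg hE0 hx₀.le)]
        linarith
      -- inductive step
      have hstep : ∀ k, 1 ≤ k → k < m+1 → r ≤ |Y (m+1) k ω| →
          |Y (m+1) k ω|^2 ≤ |Y (m+1) (k+1) ω| := by
        intro k hk1 hkN hyk
        rw [hYrec (m+1) hN1 k hkN ω, hWinc k hkN, ← hv, ← hE]
        have hw : |Δ ⟨k,hkN⟩ ω| ≤ 1 := by
          apply hΔk
          intro h0
          have := congrArg Fin.val h0
          simp at this
          omega
        have hrc' : 1 + (1 + T*E + σ) ≤ lam * v * r := by rw [← hD]; exact hrc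
        exact euler_step_lb hlam hE0 hσ hv0 hvT hw hr2 hrc' hyk
      -- induction
      have hgrow : ∀ k (hk : 1 ≤ k), k ≤ m+1 → r^(2^(k-1)) ≤ |Y (m+1) k ω| := by
        refine Nat.le_induction ?_ ?_
        · intro _
          simpa using hY1
        · intro n hn IH hn1
          have hnN : n < m+1 := by omega
          have hIH := IH (by omega)
          have hrn : r ≤ |Y (m+1) n ω| := by
            refine le_trans ?_ hIH
            exact le_self_pow₀ (by linarith) (by positivity)
          have h2 := hstep n hn hnN hrn
          have h3 : (r^(2^(n-1)))^2 ≤ |Y (m+1) n ω|^2 :=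
            pow_le_pow_left₀ (by positivity) hIH 2
          have hexp : 2^(n+1-1) = 2^(n-1)*2 := by
            have hn' : n+1-1 = (n-1)+1 := by omega
            rw [hn', pow_succ]
          calc r^(2^(n+1-1)) = (r^(2^(n-1)))^2 := by rw [hexp, pow_mul]
            _ ≤ |Y (m+1) n ω|^2 := h3
            _ ≤ |Y (m+1) (n+1) ω| := h2
      have hfin0 := hgrow (m+1) hN1 le_rfl
      rw [Nat.add_sub_cancel] at hfin0
      have hfin : (2:ℝ)^(2^m) ≤ |Y (m+1) (m+1) ω| := by
        refine le_trans ?_ hfin0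
        exact pow_le_pow_left₀ (by norm_num) hr2 _
      have h1le : (1:ℝ) ≤ (2:ℝ)^(2^m) := by
        calc (1:ℝ) = 1^(2^m) := (one_pow _).symm
          _ ≤ 2^(2^m) := pow_le_pow_left₀ zero_le_one one_le_two _
      have hY1' : (1:ℝ) ≤ |Y (m+1) (m+1) ω| := le_trans h1le hfin
      calc (2:ℝ)^(2^m) ≤ |Y (m+1) (m+1) ω| := hfin
        _ = |Y (m+1) (m+1) ω| ^ (1:ℝ) := (Real.rpow_one _).symm
        _ ≤ |Y (m+1) (m+1) ω| ^ p := Real.rpow_le_rpow_of_exponent_le hY1' hp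
    -- exponent comparison : K ≤ α(m+1) + β
    have hKb : K ≤ α*((m:ℝ)+1)+β := by
      have hre : r ≤ 2 + (1+D)*((m+1:ℕ):ℝ)/(lam*T) := by
        rw [hr]
        apply max_le
        · have : (0:ℝ) ≤ (1+D)*((m+1:ℕ):ℝ)/(lam*T) := by positivity
          linarith
        · linarith [show (0:ℝ) ≤ 2 by norm_num]
      have heq2 : α*((m:ℝ)+1)+β = (2 + (1+D)*((m+1:ℕ):ℝ)/(lam*T) + x₀*C₀)/(x₀*σ) := by
        rw [hα, hβ, hNcast]
        field_simp
        ring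
      rw [hK, heq2, div_le_div_iff₀ (by positivity) (by positivity)]
      have hmul := mul_le_mul_of_nonneg_right
        (show r + x₀*C₀ ≤ 2 + (1+D)*((m+1:ℕ):ℝ)/(lam*T) + x₀*C₀ by linarith)
        (show (0:ℝ) ≤ x₀*σ by positivity)
      linarith
    have hexpmono : Real.exp (-(α*((m:ℝ)+1)+β+1)^2*((m:ℝ)+1)/(2*T))
        ≤ Real.exp (-(K+1)^2*((m:ℝ)+1)/(2*T)) := by
      apply Real.exp_le_exp.mpr
      have hsq : (K+1)^2 ≤ (α*((m:ℝ)+1)+β+1)^2 :=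
        pow_le_pow_left₀ (by linarith) (by linarith) 2
      have hmp : (0:ℝ) ≤ ((m:ℝ)+1)/(2*T) := by positivity
      calc -(α*((m:ℝ)+1)+β+1)^2*((m:ℝ)+1)/(2*T)
          = -((α*((m:ℝ)+1)+β+1)^2*(((m:ℝ)+1)/(2*T))) := by ring
        _ ≤ -((K+1)^2*(((m:ℝ)+1)/(2*T))) :=
            neg_le_neg (mul_le_mul_of_nonneg_right hsq hmp)
        _ = -(K+1)^2*((m:ℝ)+1)/(2*T) := by ring
    -- put everything together
    calc ENNReal.ofReal ((2:ℝ)^(2^m)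
            * (c₀ * Real.exp (-(α*((m:ℝ)+1)+β+1)^2*((m:ℝ)+1)/(2*T))) * c₀^m)
        ≤ ENNReal.ofReal ((2:ℝ)^(2^m)
            * (c₀ * Real.exp (-(K+1)^2*((m:ℝ)+1)/(2*T))) * c₀^m) := by
          apply ENNReal.ofReal_le_ofReal
          apply mul_le_mul_of_nonneg_right _ (by positivity)
          apply mul_le_mul_of_nonneg_left _ (by positivity)
          exact mul_le_mul_of_nonneg_left hexpmono hc₀pos.le
      _ = ENNReal.ofReal ((2:ℝ)^(2^m))
            * (ENNReal.ofReal (c₀ * Real.exp (-(K+1)^2*((m:ℝ)+1)/(2*T)))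
              * ENNReal.ofReal c₀ ^ m) := by
          rw [ENNReal.ofReal_mul (by positivity), ENNReal.ofReal_mul (by positivity),
            ENNReal.ofReal_pow hc₀pos.le, mul_assoc]
      _ ≤ ENNReal.ofReal ((2:ℝ)^(2^m)) * P A := mul_le_mul_right hPA _
      _ = ∫⁻ ω, A.indicator (fun _ => ENNReal.ofReal ((2:ℝ)^(2^m))) ω ∂P := by
          rw [lintegral_indicator hAmeas, setLIntegral_const, mul_comm]
      _ ≤ ∫⁻ ω, ENNReal.ofReal (|Y (m+1) (m+1) ω| ^ p) ∂P := by
          apply lintegral_mono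
          intro ω
          by_cases hω : ω ∈ A
          · rw [Set.indicator_of_mem hω]
            exact ENNReal.ofReal_le_ofReal (hpoint ω hω)
          · rw [Set.indicator_of_notMem hω]
            exact zero_le
  -- conclude via the limit lemma
  rw [ENNReal.tendsto_nhds_top_iff_nnreal]
  intro x
  have hlim := euler_bLB_tendsto c₀ T α β hc₀pos hT hα0 hβ0
  have h1 := hlim.eventually_ge_atTop ((x:ℝ)+1)
  have h2 : ∀ᶠ m : ℕ in atTop, T ≤ ((m:ℝ)+1) := by
    filter_upwards [eventually_ge_atTop ⌈T⌉₊] with m hm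
    have hc : T ≤ (⌈T⌉₊:ℝ) := Nat.le_ceil T
    have h' : ((⌈T⌉₊:ℕ):ℝ) ≤ (m:ℝ) := by exact_mod_cast hm
    linarith
  obtain ⟨m₀, hm₀⟩ := eventually_atTop.mp (h1.and h2)
  rw [eventually_atTop]
  refine ⟨m₀+1, fun N hN => ?_⟩
  obtain ⟨m, rfl⟩ : ∃ m, N = m+1 := ⟨N-1, by omega⟩
  obtain ⟨hb, hTm⟩ := hm₀ m (by omega)
  calc (x:ℝ≥0∞) < ENNReal.ofReal ((x:ℝ)+1) := by
        rw [← ENNReal.ofReal_coe_nnreal]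
        exact (ENNReal.ofReal_lt_ofReal_iff (by positivity)).mpr (lt_add_one _)
    _ ≤ ENNReal.ofReal ((2:ℝ)^(2^m)
          * (c₀ * Real.exp (-(α*((m:ℝ)+1)+β+1)^2*((m:ℝ)+1)/(2*T))) * c₀^m) :=
        ENNReal.ofReal_le_ofReal hb
    _ ≤ ∫⁻ ω, ENNReal.ofReal (|Y (m+1) (m+1) ω| ^ p) ∂P := key m hTm
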